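/- For a time-invariant linear control system ẋ = Ax + Bu on ℝⁿ, the Lie-algebraic genericity condition holds — namely, the Lie algebra generated by the vector fields (1, Ax) and (0, Bu) (u ∈ ℝᵐ constant) on ℝ × ℝⁿ has dimension n + 1 at every point (τ, x) — if and only if the Kalman controllability condition rank[B, AB, …, A^{n−1}B] = n holds. -/

import Mathlib

open MeasureTheory Matrix Set Filter Topology Pointwise

/-- Support function of a set with respect to the dot product. -/
noncomputable def suppFn {ι : Type*} [Fintype ι] (Ω : Set (ι → ℝ)) (ξ : ι → ℝ) : ℝ :=
  sSup ((fun x => x ⬝ᵥ ξ) '' Ω)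

/-- A centrally symmetric convex body: compact, convex, nonempty interior, `Ω = -Ω`. -/
def IsSymConvexBody {ι : Type*} [Fintype ι] (Ω : Set (ι → ℝ)) : Prop :=
  IsCompact Ω ∧ Convex ℝ Ω ∧ (interior Ω).Nonempty ∧ Ω = -Ω

/-- `t(Ω₁, Ω₂) = inf { t ≥ 1 : tΩ₁ ⊇ Ω₂ }`. -/
noncomputable def bmFactor {ι : Type*} [Fintype ι] (Ω₁ Ω₂ : Set (ι → ℝ)) : ℝ :=
  sInf {t : ℝ | 1 ≤ t ∧ Ω₂ ⊆ t • Ω₁}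

/-- The Banach–Mazur distance `ρ(Ω₁, Ω₂) = log (t(Ω₁,Ω₂) · t(Ω₂,Ω₁))`. -/
noncomputable def bmDist {ι : Type*} [Fintype ι] (Ω₁ Ω₂ : Set (ι → ℝ)) : ℝ :=
  Real.log (bmFactor Ω₁ Ω₂ * bmFactor Ω₂ Ω₁)

/-- Distance between shapes: `ρ(Sh Ω₁, Sh Ω₂) = inf over invertible g of ρ(g Ω₁, Ω₂)`. -/
noncomputable def shapeDist {ι : Type*} [Fintype ι] [DecidableEq ι] (Ω₁ Ω₂ : Set (ι → ℝ)) : ℝ :=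
  sInf {r : ℝ | ∃ g : Matrix ι ι ℝ, IsUnit g ∧ r = bmDist (g.mulVec '' Ω₁) Ω₂}

/-- The shape of a set: its orbit under the action of invertible matrices. -/
def shapeOrbit {ι : Type*} [Fintype ι] [DecidableEq ι] (Ω : Set (ι → ℝ)) :
    Set (Set (ι → ℝ)) :=
  {S | ∃ g : Matrix ι ι ℝ, IsUnit g ∧ S = g.mulVec '' Ω}

/-- Reachable set at time `T` from the origin of `ẋ = Ax + Bu`, `u(s) ∈ U`. -/
noncomputable def reachable {ι κ : Type*} [Fintype ι] [DecidableEq ι] [Fintype κ]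
    (A : Matrix ι ι ℝ) (B : Matrix ι κ ℝ) (U : Set (κ → ℝ)) (T : ℝ) : Set (ι → ℝ) :=
  { x | ∃ u : ℝ → κ → ℝ, Measurable u ∧ (∀ s, u s ∈ U) ∧
      x = ∫ s in (0:ℝ)..T, (NormedSpace.exp ((T - s) • A)) *ᵥ (B *ᵥ u s) }

/-- The Kalman controllability condition: the columns of `B, AB, …, A^{n-1}B` span `ℝⁿ`. -/
def Kalman {n m : ℕ} (A : Matrix (Fin n) (Fin n) ℝ) (B : Matrix (Fin n) (Fin m) ℝ) : Prop :=
  Submodule.span ℝ (⋃ k ∈ Finset.range n, Set.range (A ^ k * B).mulVec) = ⊤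

/-- Lie bracket of vector fields on a normed space:
`[X, Y](p) = DY(p)·X(p) − DX(p)·Y(p)`. -/
noncomputable def lieBracketVF {E : Type*} [NormedAddCommGroup E] [NormedSpace ℝ E]
    (X Y : E → E) : E → E :=
  fun p => fderiv ℝ Y p (X p) - fderiv ℝ X p (Y p)

/-- The Lie algebra of vector fields generated by a set `S`: the smallest set of vector
fields containing `S` and closed under addition, scalar multiplication and Lie bracket. -/
def genLie {E : Type*} [NormedAddCommGroup E] [NormedSpace ℝ E] (S : Set (E → E)) :
    Set (E → E) :=
  ⋂₀ {L | S ⊆ L ∧ (∀ X ∈ L, ∀ Y ∈ L, X + Y ∈ L) ∧ (∀ (c : ℝ), ∀ X ∈ L, c • X ∈ L) ∧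
    ∀ X ∈ L, ∀ Y ∈ L, lieBracketVF X Y ∈ L}

/-- The values at the point `p` of all vector fields in the Lie algebra generated by `S`. -/
def genLieValues {E : Type*} [NormedAddCommGroup E] [NormedSpace ℝ E]
    (S : Set (E → E)) (p : E) : Set E :=
  {v | ∃ X ∈ genLie S, v = X p}

section basic
variable {E : Type*} [NormedAddCommGroup E] [NormedSpace ℝ E] (S : Set (E → E))

theorem genLie_subset_self : S ⊆ genLie S :=
  fun _X hX => Set.mem_sInter.2 fun _ hL => hL.1 hX

theorem genLie_smul (c : ℝ) {X : E → E} (hX : X ∈ genLie S) : c • X ∈ genLie S :=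
  Set.mem_sInter.2 fun L hL => hL.2.2.1 c X (Set.mem_sInter.1 hX L hL)

theorem genLie_bracket {X Y : E → E} (hX : X ∈ genLie S) (hY : Y ∈ genLie S) :
    lieBracketVF X Y ∈ genLie S :=
  Set.mem_sInter.2 fun L hL =>
    hL.2.2.2 X (Set.mem_sInter.1 hX L hL) Y (Set.mem_sInter.1 hY L hL)

theorem genLie_min {L : Set (E → E)} (h1 : S ⊆ L) (h2 : ∀ X ∈ L, ∀ Y ∈ L, X + Y ∈ L)
    (h3 : ∀ (c : ℝ), ∀ X ∈ L, c • X ∈ L)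
    (h4 : ∀ X ∈ L, ∀ Y ∈ L, lieBracketVF X Y ∈ L) : genLie S ⊆ L :=
  fun _ hX => Set.mem_sInter.1 hX L ⟨h1, h2, h3, h4⟩

end basic

section fields
variable {n : ℕ} (A : Matrix (Fin n) (Fin n) ℝ)

/-- The affine vector field `p ↦ c • (1, A x) + (0, w)`. -/
def affVF (c : ℝ) (w : Fin n → ℝ) : (ℝ × (Fin n → ℝ)) → ℝ × (Fin n → ℝ) :=
  fun p => c • ((1 : ℝ), A *ᵥ p.2) + ((0 : ℝ), w)

noncomputable def ellCLM : (ℝ × (Fin n → ℝ)) →L[ℝ] ℝ × (Fin n → ℝ) :=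
  LinearMap.toContinuousLinearMap
    ((LinearMap.inr ℝ ℝ (Fin n → ℝ)).comp (A.mulVecLin.comp (LinearMap.snd ℝ ℝ (Fin n → ℝ))))

@[simp] theorem ellCLM_apply (p : ℝ × (Fin n → ℝ)) : ellCLM A p = ((0 : ℝ), A *ᵥ p.2) := rfl

theorem affVF_hasFDeriv (c : ℝ) (w : Fin n → ℝ) (p : ℝ × (Fin n → ℝ)) :
    HasFDerivAt (affVF A c w) (c • ellCLM A) p := by
  have : affVF A c w = fun q => ((c, w) : ℝ × (Fin n → ℝ)) + (c • ellCLM A) q := by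
    funext q
    simp [affVF, Prod.ext_iff, add_comm]
  rw [this]
  have h := (hasFDerivAt_const ((c, w) : ℝ × (Fin n → ℝ)) p).add ((c • ellCLM A).hasFDerivAt)
  rw [zero_add] at h
  exact h

theorem fderiv_affVF (c : ℝ) (w : Fin n → ℝ) (p : ℝ × (Fin n → ℝ)) :
    fderiv ℝ (affVF A c w) p = c • ellCLM A :=
  (affVF_hasFDeriv A c w p).fderiv

theorem bracket_affVF (c c' : ℝ) (w w' : Fin n → ℝ) :
    lieBracketVF (affVF A c w) (affVF A c' w') =
      affVF A 0 (c' • (A *ᵥ w) - c • (A *ᵥ w')) := by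
  funext p
  simp only [lieBracketVF, fderiv_affVF, affVF, ContinuousLinearMap.smul_apply, ellCLM_apply]
  simp only [Prod.smul_mk, Prod.mk_add_mk, smul_eq_mul, mul_one, mul_zero, add_zero, zero_add,
    smul_zero, mulVec_add, Matrix.mulVec_smul, Prod.mk_sub_mk, sub_zero, Prod.mk.injEq]
  constructor
  · trivial
  · module

theorem add_affVF (c c' : ℝ) (w w' : Fin n → ℝ) :
    affVF A c w + affVF A c' w' = affVF A (c + c') (w + w') := by
  funext p
  simp only [affVF, Pi.add_apply, Prod.smul_mk, Prod.mk_add_mk, smul_eq_mul, mul_one,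
    Prod.mk.injEq]
  constructor
  · ring
  · module

theorem smul_affVF (a c : ℝ) (w : Fin n → ℝ) :
    a • affVF A c w = affVF A (a * c) (a • w) := by
  funext p
  simp only [affVF, Pi.smul_apply, smul_add, Prod.smul_mk, smul_eq_mul, mul_one,
    Prod.mk_add_mk, smul_zero, add_zero, mul_zero, Prod.mk.injEq]
  constructor
  · trivial
  · module

end fields

theorem sum_mulVec' {n m : ℕ} {ι : Type*} (s : Finset ι) (M : ι → Matrix (Fin n) (Fin m) ℝ)
    (u : Fin m → ℝ) : (∑ i ∈ s, M i) *ᵥ u = ∑ i ∈ s, M i *ᵥ u := by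
  classical
  induction s using Finset.induction with
  | empty => simp [Matrix.zero_mulVec]
  | insert _ _ h ih => simp [Finset.sum_insert h, Matrix.add_mulVec, ih]

theorem pow_card_eq {n : ℕ} (hn : 0 < n) (A : Matrix (Fin n) (Fin n) ℝ) :
    A ^ n = ∑ i ∈ Finset.range n, (Polynomial.X ^ n - A.charpoly).coeff i • A ^ i := by
  have h0 : (Polynomial.aeval A) A.charpoly = 0 := A.aeval_self_charpoly
  set q := (Polynomial.X ^ n - A.charpoly : Polynomial ℝ) with hq
  have hdeg : q.natDegree < n := by
    rcases eq_or_ne q 0 with h | h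
    · simpa [h] using hn
    · rw [Polynomial.natDegree_lt_iff_degree_lt h]
      have hd : (Polynomial.X ^ n : Polynomial ℝ).degree = A.charpoly.degree := by
        rw [Polynomial.degree_X_pow, Matrix.charpoly_degree_eq_dim]
        simp
      have := Polynomial.degree_sub_lt hd (pow_ne_zero _ Polynomial.X_ne_zero)
        (by simp [Polynomial.leadingCoeff_X_pow, (Matrix.charpoly_monic A).leadingCoeff])
      rwa [Polynomial.degree_X_pow] at this
  calc A ^ n = Polynomial.aeval A q := by
        rw [hq, map_sub, map_pow, Polynomial.aeval_X, h0, sub_zero]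
    _ = ∑ i ∈ Finset.range n, q.coeff i • A ^ i := Polynomial.aeval_eq_sum_range' hdeg A

section main
variable {n m : ℕ} (A : Matrix (Fin n) (Fin n) ℝ) (B : Matrix (Fin n) (Fin m) ℝ)

theorem hX0_eq : (fun p : ℝ × (Fin n → ℝ) => ((1 : ℝ), A *ᵥ p.2)) = affVF A 1 0 := by
  funext p
  simp [affVF, Prod.ext_iff]

theorem hconst_eq (w : Fin n → ℝ) :
    (fun _ : ℝ × (Fin n → ℝ) => ((0 : ℝ), w)) = affVF A 0 w := by
  funext p
  simp [affVF, Prod.ext_iff]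

theorem const_mem (k : ℕ) (u : Fin m → ℝ) :
    affVF A 0 (A ^ k *ᵥ (B *ᵥ u)) ∈ genLie
      {X : (ℝ × (Fin n → ℝ)) → ℝ × (Fin n → ℝ) |
        (X = fun p => (1, A *ᵥ p.2)) ∨ ∃ u : Fin m → ℝ, X = fun _ => (0, B *ᵥ u)} := by
  set S : Set ((ℝ × (Fin n → ℝ)) → ℝ × (Fin n → ℝ)) :=
    {X | (X = fun p => (1, A *ᵥ p.2)) ∨ ∃ u : Fin m → ℝ, X = fun _ => (0, B *ᵥ u)} with hS
  have hX0mem : affVF A 1 0 ∈ genLie S :=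
    genLie_subset_self S (by rw [hS]; exact Or.inl (hX0_eq A).symm)
  induction k with
  | zero =>
      have : affVF A 0 (A ^ 0 *ᵥ (B *ᵥ u)) = affVF A 0 (B *ᵥ u) := by
        rw [pow_zero, one_mulVec]
      rw [this]
      exact genLie_subset_self S (Or.inr ⟨u, (hconst_eq A (B *ᵥ u)).symm⟩)
  | succ k ih =>
      have hb := genLie_bracket S hX0mem ih
      rw [bracket_affVF] at hb
      have hs := genLie_smul S (-1) hb
      rw [smul_affVF] at hs
      have hv : (-1 : ℝ) • ((0 : ℝ) • (A *ᵥ (0 : Fin n → ℝ)) - (1 : ℝ) • (A *ᵥ (A ^ k *ᵥ (B *ᵥ u))))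
          = A ^ (k + 1) *ᵥ (B *ᵥ u) := by
        rw [mulVec_zero, smul_zero, zero_sub, one_smul, smul_neg, neg_smul, one_smul, neg_neg,
          mulVec_mulVec, ← pow_succ']
      have h2 : (-1 : ℝ) * 0 = 0 := by ring
      rwa [h2, hv] at hs

theorem lie_genericity_iff_kalman' :
    (∀ p : ℝ × (Fin n → ℝ),
      Submodule.span ℝ (genLieValues
        {X : (ℝ × (Fin n → ℝ)) → ℝ × (Fin n → ℝ) |
          (X = fun p => (1, A *ᵥ p.2)) ∨ ∃ u : Fin m → ℝ, X = fun _ => (0, B *ᵥ u)} p) = ⊤)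
      ↔ Kalman A B := by
  set S : Set ((ℝ × (Fin n → ℝ)) → ℝ × (Fin n → ℝ)) :=
    {X | (X = fun p => (1, A *ᵥ p.2)) ∨ ∃ u : Fin m → ℝ, X = fun _ => (0, B *ᵥ u)} with hS
  constructor
  · -- Lie genericity → Kalman
    intro h
    -- the submodule spanned by all A^k B u, k arbitrary
    set W : Submodule ℝ (Fin n → ℝ) :=
      Submodule.span ℝ (⋃ k : ℕ, Set.range (A ^ k * B).mulVec) with hW
    have hAinv : ∀ w ∈ W, A *ᵥ w ∈ W := by
      have hle : W ≤ W.comap A.mulVecLin := by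
        rw [hW, Submodule.span_le]
        rintro y hy
        simp only [Set.mem_iUnion, Set.mem_range] at hy
        obtain ⟨k, u, rfl⟩ := hy
        have : A.mulVecLin ((A ^ k * B) *ᵥ u) = (A ^ (k + 1) * B) *ᵥ u := by
          rw [mulVecLin_apply, mulVec_mulVec, ← Matrix.mul_assoc, ← pow_succ']
        refine Submodule.mem_comap.2 ?_
        rw [this]
        exact Submodule.subset_span (Set.mem_iUnion.2 ⟨k + 1, Set.mem_range.2 ⟨u, rfl⟩⟩)
      intro w hw
      exact Submodule.mem_comap.1 (hle hw)
    -- genLie S is contained in the affine fields with translation part in W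
    have hL0 : genLie S ⊆ {X | ∃ c : ℝ, ∃ w : Fin n → ℝ, w ∈ W ∧ X = affVF A c w} := by
      apply genLie_min
      · rintro X (rfl | ⟨u, rfl⟩)
        · exact ⟨1, 0, W.zero_mem, hX0_eq A⟩
        · refine ⟨0, B *ᵥ u, ?_, hconst_eq A (B *ᵥ u)⟩
          refine Submodule.subset_span (Set.mem_iUnion.2 ⟨0, Set.mem_range.2 ⟨u, ?_⟩⟩)
          rw [pow_zero, Matrix.one_mul]
      · rintro X ⟨c, w, hw, rfl⟩ Y ⟨c', w', hw', rfl⟩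
        exact ⟨c + c', w + w', W.add_mem hw hw', add_affVF A c c' w w'⟩
      · rintro a X ⟨c, w, hw, rfl⟩
        exact ⟨a * c, a • w, W.smul_mem a hw, smul_affVF A a c w⟩
      · rintro X ⟨c, w, hw, rfl⟩ Y ⟨c', w', hw', rfl⟩
        exact ⟨0, c' • (A *ᵥ w) - c • (A *ᵥ w'),
          W.sub_mem (W.smul_mem c' (hAinv w hw)) (W.smul_mem c (hAinv w' hw')),
          bracket_affVF A c c' w w'⟩
    -- evaluating at the origin shows W = ⊤
    have hWtop : W = ⊤ := by
      rw [eq_top_iff]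
      intro v _
      have hp := h (0, 0)
      have hsub : genLieValues S (0, 0) ⊆ ↑((⊤ : Submodule ℝ ℝ).prod W) := by
        rintro _ ⟨X, hX, rfl⟩
        obtain ⟨c, w, hwW, rfl⟩ := hL0 hX
        have : affVF A c w ((0 : ℝ), (0 : Fin n → ℝ)) = (c, w) := by
          simp [affVF, mulVec_zero, Prod.ext_iff]
        rw [this]
        exact Submodule.mem_prod.2 ⟨Submodule.mem_top, hwW⟩
      have hle : (⊤ : Submodule ℝ (ℝ × (Fin n → ℝ))) ≤ (⊤ : Submodule ℝ ℝ).prod W := by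
        rw [← hp]
        exact Submodule.span_le.2 hsub
      exact (Submodule.mem_prod.1 (hle (Submodule.mem_top (x := ((0 : ℝ), v))))).2
    -- now reduce to powers k < n via Cayley–Hamilton
    rcases Nat.eq_zero_or_pos n with hn | hn
    · subst hn
      exact Subsingleton.elim _ _
    set Wn : Submodule ℝ (Fin n → ℝ) :=
      Submodule.span ℝ (⋃ k ∈ Finset.range n, Set.range (A ^ k * B).mulVec) with hWn
    have hmemWn : ∀ k, k < n → ∀ u : Fin m → ℝ, (A ^ k * B) *ᵥ u ∈ Wn := by
      intro k hk u
      exact Submodule.subset_span (Set.mem_iUnion₂.2 ⟨k, Finset.mem_range.2 hk,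
        Set.mem_range.2 ⟨u, rfl⟩⟩)
    have hCH : ∀ u : Fin m → ℝ, (A ^ n * B) *ᵥ u ∈ Wn := by
      intro u
      rw [pow_card_eq hn A, Matrix.sum_mul, sum_mulVec']
      refine Submodule.sum_mem _ fun i hi => ?_
      rw [Matrix.smul_mul, smul_mulVec]
      exact Wn.smul_mem _ (hmemWn i (Finset.mem_range.1 hi) u)
    have hAinvWn : ∀ w ∈ Wn, A *ᵥ w ∈ Wn := by
      have hle : Wn ≤ Wn.comap A.mulVecLin := by
        rw [hWn, Submodule.span_le]
        rintro y hy
        obtain ⟨k, hk, u, rfl⟩ := Set.mem_iUnion₂.1 hy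
        refine Submodule.mem_comap.2 ?_
        have heq : A.mulVecLin ((A ^ k * B) *ᵥ u) = (A ^ (k + 1) * B) *ᵥ u := by
          rw [mulVecLin_apply, mulVec_mulVec, ← Matrix.mul_assoc, ← pow_succ']
        rw [heq]
        rcases Nat.lt_or_ge (k + 1) n with h' | h'
        · exact hmemWn _ h' u
        · have hkn : k + 1 = n :=
            le_antisymm (Nat.succ_le_of_lt (Finset.mem_range.1 hk)) h'
          rw [hkn]
          exact hCH u
      intro w hw
      exact Submodule.mem_comap.1 (hle hw)
    have hall : ∀ k, ∀ u : Fin m → ℝ, (A ^ k * B) *ᵥ u ∈ Wn := by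
      intro k
      induction k with
      | zero => exact fun u => hmemWn 0 hn u
      | succ k ih =>
          intro u
          have heq : (A ^ (k + 1) * B) *ᵥ u = A *ᵥ ((A ^ k * B) *ᵥ u) := by
            rw [mulVec_mulVec, ← Matrix.mul_assoc, ← pow_succ']
          rw [heq]
          exact hAinvWn _ (ih u)
    show Wn = ⊤
    rw [eq_top_iff, ← hWtop, hW, Submodule.span_le]
    rintro y hy
    obtain ⟨k, u, rfl⟩ := Set.mem_iUnion.1 hy
    exact hall k u
  · -- Kalman → Lie genericity
    intro hK p
    rw [Submodule.eq_top_iff']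
    intro v
    have hX0mem : affVF A 1 0 ∈ genLie S :=
      genLie_subset_self S (by rw [hS]; exact Or.inl (hX0_eq A).symm)
    have hx0 : ((1 : ℝ), A *ᵥ p.2) ∈ Submodule.span ℝ (genLieValues S p) := by
      refine Submodule.subset_span ⟨affVF A 1 0, hX0mem, ?_⟩
      simp [affVF, Prod.ext_iff]
    have hsnd : ∀ y : Fin n → ℝ, ((0 : ℝ), y) ∈ Submodule.span ℝ (genLieValues S p) := by
      intro y
      have hle : Submodule.span ℝ (⋃ k ∈ Finset.range n, Set.range (A ^ k * B).mulVec) ≤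
          (Submodule.span ℝ (genLieValues S p)).comap (LinearMap.inr ℝ ℝ (Fin n → ℝ)) := by
        rw [Submodule.span_le]
        rintro w hw
        obtain ⟨k, hk, u, rfl⟩ := Set.mem_iUnion₂.1 hw
        refine Submodule.mem_comap.2 (Submodule.subset_span
          ⟨affVF A 0 (A ^ k *ᵥ (B *ᵥ u)), const_mem A B k u, ?_⟩)
        simp [affVF, mulVec_mulVec, Prod.ext_iff]
      have := hle (by rw [hK]; exact Submodule.mem_top : y ∈ _)
      simpa using this
    have hv : v = v.1 • ((1 : ℝ), A *ᵥ p.2) + ((0 : ℝ), v.2 - v.1 • (A *ᵥ p.2)) := by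
      simp [Prod.ext_iff]
    rw [hv]
    exact Submodule.add_mem _ (Submodule.smul_mem _ v.1 hx0) (hsnd _)

end main

/-- **The Lie-algebraic genericity condition is equivalent to the Kalman condition.**
For a time-invariant system `ẋ = Ax + Bu`, the Lie algebra generated by the vector
fields `(1, Ax)` and `(0, Bu)` (`u ∈ ℝᵐ` constant) on `ℝ × ℝⁿ` has full dimension
`n + 1` at every point iff `rank [B, AB, …, A^{n−1}B] = n`. -/
theorem lie_genericity_iff_kalman {n m : ℕ}
    (A : Matrix (Fin n) (Fin n) ℝ) (B : Matrix (Fin n) (Fin m) ℝ) :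
    (∀ p : ℝ × (Fin n → ℝ),
      Submodule.span ℝ (genLieValues
        {X : (ℝ × (Fin n → ℝ)) → ℝ × (Fin n → ℝ) |
          (X = fun p => (1, A *ᵥ p.2)) ∨ ∃ u : Fin m → ℝ, X = fun _ => (0, B *ᵥ u)} p) = ⊤)
      ↔ Kalman A B :=
  lie_genericity_iff_kalman' A B
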